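/- arXiv:2305.06180 — 4 statements merged into one kernel-verified Lean document; each statement's English description precedes it below -/
import Mathlib

section
/- Let L > 0 and Δt > 0, let X, u : ℝ → ℝ² be continuously differentiable and L-periodic with ‖X'(s) + Δt·u'(s)‖ > 0 for every s, and let v : ℝ → ℝ² be continuously differentiable and L-periodic. Then the function ε ↦ ∫₀^L ‖X'(s) + Δt·u'(s) + ε·Δt·v'(s)‖ ds is differentiable at ε = 0, with derivative equal to Δt·∫₀^L ⟨v'(s), T(s)⟩ ds, where T(s) = (X'(s) + Δt·u'(s))/‖X'(s) + Δt·u'(s)‖. -/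
open MeasureTheory
open scoped RealInnerProductSpace

private lemma hasDerivAt_norm_aux {F : Type*} [NormedAddCommGroup F]
    [InnerProductSpace ℝ F] {g : ℝ → F} {g' : F} {x : ℝ}
    (hg : HasDerivAt g g' x) (h0 : g x ≠ 0) :
    HasDerivAt (fun t => ‖g t‖) (‖g x‖⁻¹ * ⟪g x, g'⟫) x := by
  have h1 : HasDerivAt (fun t => ‖g t‖ ^ 2) (2 * ⟪g x, g'⟫) x := hg.norm_sq
  have hsq : ‖g x‖ ^ 2 ≠ 0 := pow_ne_zero _ (norm_ne_zero_iff.mpr h0)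
  have h2 := h1.sqrt hsq
  have heq : (fun t => Real.sqrt (‖g t‖ ^ 2)) = fun t => ‖g t‖ := by
    funext t; exact Real.sqrt_sq (norm_nonneg _)
  rw [heq] at h2
  convert h2 using 1
  rw [Real.sqrt_sq (norm_nonneg _)]
  have : ‖g x‖ ≠ 0 := norm_ne_zero_iff.mpr h0
  field_simp

/-- First variation of the deformed perimeter (Lemma 3.1, eq. (eq:dPer 1)). -/
theorem stmt0
    (L Δt : ℝ) (hL : 0 < L) (hΔt : 0 < Δt)
    (X u v : ℝ → EuclideanSpace ℝ (Fin 2))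
    (hX : ContDiff ℝ 1 X) (hu : ContDiff ℝ 1 u) (hv : ContDiff ℝ 1 v)
    (hXper : Function.Periodic X L) (huper : Function.Periodic u L)
    (hvper : Function.Periodic v L)
    (hpos : ∀ s, 0 < ‖deriv X s + Δt • deriv u s‖)
    (T : ℝ → EuclideanSpace ℝ (Fin 2))
    (hT : ∀ s, T s = ‖deriv X s + Δt • deriv u s‖⁻¹ • (deriv X s + Δt • deriv u s)) :
    HasDerivAt
      (fun ε : ℝ => ∫ s in (0:ℝ)..L, ‖deriv X s + Δt • deriv u s + (ε * Δt) • deriv v s‖)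
      (Δt * ∫ s in (0:ℝ)..L, ⟪deriv v s, T s⟫) 0 := by
  set Y : ℝ → EuclideanSpace ℝ (Fin 2) := fun s => deriv X s + Δt • deriv u s with hYdef
  set W : ℝ → EuclideanSpace ℝ (Fin 2) := fun s => deriv v s with hWdef
  have hY : Continuous Y :=
    ((hX.continuous_deriv le_rfl).add ((hu.continuous_deriv le_rfl).const_smul Δt))
  have hW : Continuous W := hv.continuous_deriv le_rfl
  have hposY : ∀ s, 0 < ‖Y s‖ := hpos
  -- min norm of Y and max norm of W on uIcc 0 L
  have hKc : IsCompact (Set.uIcc (0:ℝ) L) := isCompact_uIcc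
  have hKne : (Set.uIcc (0:ℝ) L).Nonempty := Set.nonempty_uIcc
  obtain ⟨s₀, hs₀K, hs₀min⟩ := hKc.exists_isMinOn hKne (hY.norm.continuousOn)
  set m : ℝ := ‖Y s₀‖ with hm
  have hm0 : 0 < m := hposY s₀
  obtain ⟨s₁, hs₁K, hs₁max⟩ := hKc.exists_isMaxOn hKne (hW.norm.continuousOn)
  set M : ℝ := ‖W s₁‖ with hM
  have hM0 : 0 ≤ M := norm_nonneg _
  set r : ℝ := m / (2 * Δt * (M + 1)) with hr
  have hr0 : 0 < r := div_pos hm0 (by positivity)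
  -- nonvanishing of deformed vector near ε = 0
  have hne : ∀ ε ∈ Metric.ball (0:ℝ) r, ∀ s ∈ Set.uIcc (0:ℝ) L,
      Y s + (ε * Δt) • W s ≠ 0 := by
    intro ε hε s hs
    have hεr : |ε| < r := by simpa [Real.dist_eq] using hε
    have h1 : ‖(ε * Δt) • W s‖ ≤ r * Δt * M := by
      rw [norm_smul]
      have hWs : ‖W s‖ ≤ M := hs₁max hs
      calc ‖ε * Δt‖ * ‖W s‖ ≤ (r * Δt) * M := by
            apply mul_le_mul _ hWs (norm_nonneg _) (by positivity)
            rw [Real.norm_eq_abs, abs_mul, abs_of_pos hΔt]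
            exact mul_le_mul_of_nonneg_right hεr.le hΔt.le
        _ = r * Δt * M := by ring
    have h2 : r * Δt * M < m := by
      rw [hr, div_mul_eq_mul_div, div_mul_eq_mul_div, div_lt_iff₀ (by positivity)]
      have hq : 0 < m * Δt * (M + 2) := by positivity
      nlinarith [hq]
    have h3 : m ≤ ‖Y s‖ := hs₀min hs
    have key : ‖Y s‖ ≤ ‖Y s + (ε * Δt) • W s‖ + ‖(ε * Δt) • W s‖ := by
      simpa using norm_add_le (Y s + (ε * Δt) • W s) (-((ε * Δt) • W s))
    have hpos' : 0 < ‖Y s + (ε * Δt) • W s‖ := by linarith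
    exact norm_pos_iff.mp hpos'
  -- the ε-derivative of the integrand
  set F' : ℝ → ℝ → ℝ := fun ε s =>
    Δt * ⟪W s, ‖Y s + (ε * Δt) • W s‖⁻¹ • (Y s + (ε * Δt) • W s)⟫ with hF'def
  have hF'0 : F' 0 = fun s => Δt * ⟪W s, T s⟫ := by
    funext s
    rw [hF'def, hT s]
    simp [hYdef]
  have hdiff : ∀ s ∈ Set.uIcc (0:ℝ) L, ∀ ε ∈ Metric.ball (0:ℝ) r,
      HasDerivAt (fun ε => ‖Y s + (ε * Δt) • W s‖) (F' ε s) ε := by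
    intro s hs ε hε
    have hg : HasDerivAt (fun ε : ℝ => Y s + (ε * Δt) • W s) (Δt • W s) ε := by
      have h1 : HasDerivAt (fun ε : ℝ => ε * Δt) Δt ε := hasDerivAt_mul_const Δt
      simpa using (h1.smul_const (W s)).const_add (Y s)
    have h0 := hne ε hε s hs
    have hd := hasDerivAt_norm_aux hg h0
    convert hd using 1
    rw [hF'def]
    simp only [real_inner_smul_left, real_inner_smul_right, real_inner_comm (W s)]
    ring
  -- continuity of T
  have hTc : Continuous T := by
    have : Continuous fun s => ‖Y s‖⁻¹ • Y s :=
      (hY.norm.inv₀ fun s => (hposY s).ne').smul hY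
    exact this.congr fun s => by rw [hT s]
  -- apply dominated differentiation under the integral
  have main := intervalIntegral.hasDerivAt_integral_of_dominated_loc_of_deriv_le
    (F := fun ε s => ‖Y s + (ε * Δt) • W s‖) (F' := F') (x₀ := (0:ℝ))
    (a := (0:ℝ)) (b := L) (bound := fun _ => Δt * M) (μ := volume) (Metric.ball_mem_nhds _ hr0)
    ?_ ?_ ?_ ?_ ?_ ?_
  · obtain ⟨-, hmain⟩ := main
    have hval : (∫ s in (0:ℝ)..L, F' 0 s) = Δt * ∫ s in (0:ℝ)..L, ⟪W s, T s⟫ := by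
      rw [hF'0, intervalIntegral.integral_const_mul]
    rw [hval] at hmain
    exact hmain
  · filter_upwards with ε
    exact ((hY.add (hW.const_smul (ε * Δt))).norm).aestronglyMeasurable
  · exact ((hY.add (hW.const_smul ((0:ℝ) * Δt))).norm).intervalIntegrable _ _
  · rw [hF'0]
    exact (continuous_const.mul (hW.inner hTc)).aestronglyMeasurable
  · filter_upwards with s hs ε hε
    have hWs : ‖W s‖ ≤ M := hs₁max (Set.uIoc_subset_uIcc hs)
    rw [hF'def]
    simp only [Real.norm_eq_abs, abs_mul, abs_of_pos hΔt]
    apply mul_le_mul_of_nonneg_left _ hΔt.le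
    calc |⟪W s, ‖Y s + (ε * Δt) • W s‖⁻¹ • (Y s + (ε * Δt) • W s)⟫|
        ≤ ‖W s‖ * ‖‖Y s + (ε * Δt) • W s‖⁻¹ • (Y s + (ε * Δt) • W s)‖ :=
          abs_real_inner_le_norm _ _
      _ ≤ ‖W s‖ * 1 := by
          apply mul_le_mul_of_nonneg_left _ (norm_nonneg _)
          rw [norm_smul, Real.norm_eq_abs, abs_inv, abs_norm]
          rcases eq_or_ne (Y s + (ε * Δt) • W s) 0 with h | h
          · simp [h]
          · rw [inv_mul_cancel₀ (norm_ne_zero_iff.mpr h)]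
      _ = ‖W s‖ := mul_one _
      _ ≤ M := hWs
  · exact intervalIntegrable_const
  · filter_upwards with s hs ε hε
    exact hdiff s (Set.uIoc_subset_uIcc hs) ε hε
end

section
/- Let L > 0 and Δt > 0, let X, u : ℝ → ℝ² be twice continuously differentiable and L-periodic with ‖X'(s) + Δt·u'(s)‖ > 0 for every s, and let v : ℝ → ℝ² be continuously differentiable and L-periodic. Set T(s) = (X'(s) + Δt·u'(s))/‖X'(s) + Δt·u'(s)‖ and H̃(s) = −T'(s). Then the derivative at ε = 0 of ε ↦ ∫₀^L ‖X'(s) + Δt·u'(s) + ε·Δt·v'(s)‖ ds equals Δt·∫₀^L ⟨v(s), H̃(s)⟩ ds. -/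
open MeasureTheory
open scoped RealInnerProductSpace

private lemma periodic_deriv_aux {E : Type*} [NormedAddCommGroup E] [NormedSpace ℝ E]
    {f : ℝ → E} {L : ℝ} (hf : Function.Periodic f L) : Function.Periodic (deriv f) L := by
  intro s
  have h : (fun t => f (t + L)) = f := funext hf
  rw [← deriv_comp_add_const f L s, h]

private lemma hasDerivAt_norm_affine {E : Type*} [NormedAddCommGroup E] [InnerProductSpace ℝ E]
    (a b : E) (x : ℝ) (h : a + x • b ≠ 0) :
    HasDerivAt (fun t : ℝ => ‖a + t • b‖) ⟪b, ‖a + x • b‖⁻¹ • (a + x • b)⟫ x := by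
  have hgx : HasDerivAt (fun t : ℝ => a + t • b) b x := by
    simpa using ((hasDerivAt_id x).smul_const b).const_add a
  have hinner : HasDerivAt (fun t => ⟪a + t • b, a + t • b⟫)
      (⟪a + x • b, b⟫ + ⟪b, a + x • b⟫) x := hgx.inner ℝ hgx
  have hne : ‖a + x • b‖ ≠ 0 := norm_ne_zero_iff.mpr h
  have hgx0 : ⟪a + x • b, a + x • b⟫ ≠ 0 := by
    rw [real_inner_self_eq_norm_mul_norm]; exact mul_ne_zero hne hne
  have hs : HasDerivAt (fun t => Real.sqrt ⟪a + t • b, a + t • b⟫)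
      ((⟪a + x • b, b⟫ + ⟪b, a + x • b⟫) / (2 * Real.sqrt ⟪a + x • b, a + x • b⟫)) x :=
    hinner.sqrt hgx0
  have hnorm : (fun t : ℝ => Real.sqrt ⟪a + t • b, a + t • b⟫) = fun t => ‖a + t • b‖ := by
    funext t; rw [real_inner_self_eq_norm_mul_norm, Real.sqrt_mul_self (norm_nonneg _)]
  rw [hnorm] at hs
  have hval : ⟪b, ‖a + x • b‖⁻¹ • (a + x • b)⟫
      = (⟪a + x • b, b⟫ + ⟪b, a + x • b⟫) / (2 * Real.sqrt ⟪a + x • b, a + x • b⟫) := by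
    rw [real_inner_self_eq_norm_mul_norm, Real.sqrt_mul_self (norm_nonneg _),
      real_inner_smul_right, real_inner_comm (a + x • b) b]
    field_simp
    ring
  rw [hval]
  exact hs

/-- First variation of the deformed perimeter expressed through the pulled-back
curvature vector (Lemma 3.1 of the paper). -/
theorem stmt1
    (L Δt : ℝ) (hL : 0 < L) (hΔt : 0 < Δt)
    (X u v : ℝ → EuclideanSpace ℝ (Fin 2))
    (hX : ContDiff ℝ 2 X) (hu : ContDiff ℝ 2 u) (hv : ContDiff ℝ 1 v)
    (hXper : Function.Periodic X L) (huper : Function.Periodic u L)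
    (hvper : Function.Periodic v L)
    (hpos : ∀ s, 0 < ‖deriv X s + Δt • deriv u s‖)
    (T Htilde : ℝ → EuclideanSpace ℝ (Fin 2))
    (hT : ∀ s, T s = ‖deriv X s + Δt • deriv u s‖⁻¹ • (deriv X s + Δt • deriv u s))
    (hH : ∀ s, Htilde s = -deriv T s) :
    HasDerivAt
      (fun ε : ℝ => ∫ s in (0:ℝ)..L, ‖deriv X s + Δt • deriv u s + (ε * Δt) • deriv v s‖)
      (Δt * ∫ s in (0:ℝ)..L, ⟪v s, Htilde s⟫) 0 := by
  classical
  set Y : ℝ → EuclideanSpace ℝ (Fin 2) := fun s => deriv X s + Δt • deriv u s with hYdef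
  have hYs : ∀ s, Y s = deriv X s + Δt • deriv u s := fun _ => rfl
  -- smoothness facts
  have hX2 : ContDiff ℝ (1 + 1) X := by exact_mod_cast hX
  have hu2 : ContDiff ℝ (1 + 1) u := by exact_mod_cast hu
  have hX1 : ContDiff ℝ 1 (deriv X) := (contDiff_succ_iff_deriv.mp hX2).2.2
  have hu1 : ContDiff ℝ 1 (deriv u) := (contDiff_succ_iff_deriv.mp hu2).2.2
  have hY1 : ContDiff ℝ 1 Y := hX1.add (hu1.const_smul Δt)
  have hYpos : ∀ s, 0 < ‖Y s‖ := fun s => by rw [hYs s]; exact hpos s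
  have hYne : ∀ s, Y s ≠ 0 := fun s => norm_pos_iff.mp (hYpos s)
  have hYnne : ∀ s, ‖Y s‖ ≠ 0 := fun s => (hYpos s).ne'
  have hTY : ∀ s, T s = ‖Y s‖⁻¹ • Y s := fun s => by rw [hT s, hYs s]
  have hT1 : ContDiff ℝ 1 T := by
    have : T = fun s => ‖Y s‖⁻¹ • Y s := funext hTY
    rw [this]
    exact ((hY1.norm ℝ hYne).inv hYnne).smul hY1
  have hv'cont : Continuous (deriv v) := hv.continuous_deriv le_rfl
  have hYcont : Continuous Y := hY1.continuous
  have hTcont : Continuous T := hT1.continuous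
  have hT'cont : Continuous (deriv T) := hT1.continuous_deriv le_rfl
  -- periodicity
  have hYper : Function.Periodic Y L := fun s => by
    simp only [hYs, periodic_deriv_aux hXper s, periodic_deriv_aux huper s]
  have hTper : Function.Periodic T L := fun s => by rw [hTY, hTY, hYper s]
  -- constants from compactness
  have hIccne : (Set.Icc (0:ℝ) L).Nonempty := ⟨0, le_rfl, hL.le⟩
  obtain ⟨s₀, hs₀mem, hs₀⟩ := (isCompact_Icc (a := (0:ℝ)) (b := L)).exists_isMinOn hIccne
    (hYcont.norm.continuousOn)
  obtain ⟨s₁, hs₁mem, hs₁⟩ := (isCompact_Icc (a := (0:ℝ)) (b := L)).exists_isMaxOn hIccne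
    (hv'cont.norm.continuousOn)
  set c : ℝ := ‖Y s₀‖ with hc
  set M : ℝ := ‖deriv v s₁‖ with hM
  have hcpos : 0 < c := hYpos s₀
  have hM0 : 0 ≤ M := norm_nonneg _
  have hden : 0 < Δt * (M + 1) := by positivity
  set ε : ℝ := c / (Δt * (M + 1)) with hε
  have hεpos : 0 < ε := div_pos hcpos hden
  have hsub : Set.uIoc (0:ℝ) L ⊆ Set.Icc 0 L := by
    rw [Set.uIoc_of_le hL.le]; exact Set.Ioc_subset_Icc_self
  -- key nonvanishing
  have key : ∀ s ∈ Set.Icc (0:ℝ) L, ∀ x ∈ Metric.ball (0:ℝ) ε,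
      Y s + x • (Δt • deriv v s) ≠ 0 := by
    intro s hs x hx
    have hxlt : |x| < ε := by simpa [Real.dist_eq] using hx
    have h1 : ‖x • (Δt • deriv v s)‖ < c := by
      rw [norm_smul, norm_smul, Real.norm_eq_abs, Real.norm_eq_abs, abs_of_pos hΔt]
      calc |x| * (Δt * ‖deriv v s‖) ≤ |x| * (Δt * (M + 1)) := by
            apply mul_le_mul_of_nonneg_left _ (abs_nonneg x)
            apply mul_le_mul_of_nonneg_left _ hΔt.le
            exact le_trans (hs₁ hs) (by linarith)
        _ < ε * (Δt * (M + 1)) := by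
            exact mul_lt_mul_of_pos_right hxlt hden
        _ = c := div_mul_cancel₀ c hden.ne'
    intro h0
    have hY' : Y s = -(x • (Δt • deriv v s)) := eq_neg_of_add_eq_zero_left h0
    have : ‖Y s‖ < c := by rw [hY', norm_neg]; exact h1
    exact absurd (hs₀ hs) (not_le.mpr this)
  -- the pointwise derivative
  set F' : ℝ → ℝ → ℝ := fun x s =>
    ⟪Δt • deriv v s, ‖Y s + x • (Δt • deriv v s)‖⁻¹ • (Y s + x • (Δt • deriv v s))⟫ with hF'def
  have hcontx : ∀ x : ℝ, Continuous fun s => ‖Y s + x • (Δt • deriv v s)‖ := fun x =>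
    (hYcont.add ((hv'cont.const_smul Δt).const_smul x)).norm
  have main := intervalIntegral.hasDerivAt_integral_of_dominated_loc_of_deriv_le
      (F := fun x s => ‖Y s + x • (Δt • deriv v s)‖) (F' := F') (x₀ := (0:ℝ))
      (a := 0) (b := L) (bound := fun s => Δt * ‖deriv v s‖) (μ := volume) (Metric.ball_mem_nhds _ hεpos)
      (Filter.Eventually.of_forall fun x => ((hcontx x).aestronglyMeasurable).restrict)
      ((hcontx 0).intervalIntegrable 0 L)
      (by
        have : Continuous (F' 0) := by
          have hF'0 : F' 0 = fun s => ⟪Δt • deriv v s, ‖Y s‖⁻¹ • Y s⟫ := by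
            funext s; simp [hF'def]
          rw [hF'0]
          exact (hv'cont.const_smul Δt).inner
            ((hYcont.norm.inv₀ hYnne).smul hYcont)
        exact this.aestronglyMeasurable.restrict)
      (Filter.Eventually.of_forall (fun s hs x hx => by
        have hb : ‖F' x s‖ ≤ ‖Δt • deriv v s‖ *
            ‖‖Y s + x • (Δt • deriv v s)‖⁻¹ • (Y s + x • (Δt • deriv v s))‖ := by
          simpa [hF'def, Real.norm_eq_abs] using
            abs_real_inner_le_norm (Δt • deriv v s)
              (‖Y s + x • (Δt • deriv v s)‖⁻¹ • (Y s + x • (Δt • deriv v s)))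
        have hunit : ‖‖Y s + x • (Δt • deriv v s)‖⁻¹ • (Y s + x • (Δt • deriv v s))‖ = 1 := by
          have hne0 : Y s + x • (Δt • deriv v s) ≠ 0 := key s (hsub hs) x hx
          rw [norm_smul, Real.norm_eq_abs, abs_of_nonneg (inv_nonneg.mpr (norm_nonneg _)),
            inv_mul_cancel₀ (norm_ne_zero_iff.mpr hne0)]
        calc ‖F' x s‖ ≤ ‖Δt • deriv v s‖ * 1 := by rw [← hunit]; exact hb
          _ = Δt * ‖deriv v s‖ := by
            rw [mul_one, norm_smul, Real.norm_eq_abs, abs_of_pos hΔt]))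
      ((continuous_const.mul hv'cont.norm).intervalIntegrable 0 L)
      (Filter.Eventually.of_forall (fun s hs x hx =>
        hasDerivAt_norm_affine (Y s) (Δt • deriv v s) x (key s (hsub hs) x hx)))
  -- identify the function
  have hfun : (fun ε : ℝ =>
      ∫ s in (0:ℝ)..L, ‖deriv X s + Δt • deriv u s + (ε * Δt) • deriv v s‖)
      = fun x : ℝ => ∫ s in (0:ℝ)..L, ‖Y s + x • (Δt • deriv v s)‖ := by
    funext x; congr 1; funext s; rw [hYs s, smul_smul]
  -- identify the derivative value via integration by parts
  have hF'0 : ∀ s, F' 0 s = Δt * ⟪deriv v s, T s⟫ := by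
    intro s
    simp only [hF'def, zero_smul, add_zero]
    rw [← hTY s, real_inner_smul_left]
  have hφderiv : ∀ s, HasDerivAt (fun t => ⟪v t, T t⟫)
      (⟪v s, deriv T s⟫ + ⟪deriv v s, T s⟫) s := fun s =>
    ((hv.differentiable one_ne_zero s).hasDerivAt).inner ℝ
      ((hT1.differentiable one_ne_zero s).hasDerivAt)
  have hint1 : IntervalIntegrable (fun s => ⟪v s, deriv T s⟫) volume 0 L :=
    (hv.continuous.inner hT'cont).intervalIntegrable 0 L
  have hint2 : IntervalIntegrable (fun s => ⟪deriv v s, T s⟫) volume 0 L :=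
    (hv'cont.inner hTcont).intervalIntegrable 0 L
  have hFTC : (∫ s in (0:ℝ)..L, (⟪v s, deriv T s⟫ + ⟪deriv v s, T s⟫))
      = ⟪v L, T L⟫ - ⟪v 0, T 0⟫ :=
    intervalIntegral.integral_eq_sub_of_hasDerivAt (fun s _ => hφderiv s)
      (((hv.continuous.inner hT'cont).add (hv'cont.inner hTcont)).intervalIntegrable 0 L)
  have hvL : v L = v 0 := by simpa using hvper 0
  have hTL : T L = T 0 := by simpa using hTper 0
  have hzero : (∫ s in (0:ℝ)..L, ⟪v s, deriv T s⟫) + ∫ s in (0:ℝ)..L, ⟪deriv v s, T s⟫ = 0 := by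
    rw [← intervalIntegral.integral_add hint1 hint2, hFTC, hvL, hTL, sub_self]
  have hparts : (∫ s in (0:ℝ)..L, ⟪deriv v s, T s⟫) = ∫ s in (0:ℝ)..L, ⟪v s, Htilde s⟫ := by
    have : (∫ s in (0:ℝ)..L, ⟪v s, Htilde s⟫) = -∫ s in (0:ℝ)..L, ⟪v s, deriv T s⟫ := by
      rw [← intervalIntegral.integral_neg]
      congr 1; funext s; rw [hH s, inner_neg_right]
    rw [this]; linarith [hzero]
  have hval : (∫ s in (0:ℝ)..L, F' 0 s) = Δt * ∫ s in (0:ℝ)..L, ⟪v s, Htilde s⟫ := by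
    rw [show (fun s => F' 0 s) = fun s => Δt * ⟪deriv v s, T s⟫ from funext hF'0]
    rw [intervalIntegral.integral_const_mul, hparts]
  rw [hfun, ← hval]
  exact main.2
end

section
/- Let L > 0 and Δt > 0, let X, u : ℝ → ℝ² be continuously differentiable and L-periodic with ‖X'(s) + Δt·u'(s)‖ > 0 for every s, and let v : ℝ → ℝ² be continuously differentiable and L-periodic. Then the function g(ε) = ∫₀^L ‖X'(s) + Δt·u'(s) + ε·Δt·v'(s)‖ ds is twice differentiable at ε = 0, and g''(0) = Δt²·∫₀^L (‖v'(s)‖² − ⟨v'(s), T(s)⟩²)/‖X'(s) + Δt·u'(s)‖ ds, where T(s) = (X'(s) + Δt·u'(s))/‖X'(s) + Δt·u'(s)‖. -/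
open MeasureTheory Metric
open scoped RealInnerProductSpace

variable {E : Type*} [NormedAddCommGroup E] [InnerProductSpace ℝ E]

lemma my_d1 (a b : E) (ε : ℝ) (h : a + ε • b ≠ 0) :
    HasDerivAt (fun x : ℝ => ‖a + x • b‖) (⟪b, a + ε • b⟫ / ‖a + ε • b‖) ε := by
  have hy : HasDerivAt (fun x : ℝ => a + x • b) b ε := by
    simpa using ((hasDerivAt_id ε).smul_const b).const_add a
  have hinner : HasDerivAt (fun x : ℝ => ⟪a + x • b, a + x • b⟫)
      (⟪a + ε • b, b⟫ + ⟪b, a + ε • b⟫) ε := hy.inner ℝ hy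
  have hne : ⟪a + ε • b, a + ε • b⟫ ≠ 0 := inner_self_ne_zero.2 h
  have := hinner.sqrt hne
  have heq : (fun x : ℝ => Real.sqrt ⟪a + x • b, a + x • b⟫)
      = fun x : ℝ => ‖a + x • b‖ := by
    funext x
    rw [real_inner_self_eq_norm_mul_norm, Real.sqrt_mul_self (norm_nonneg _)]
  rw [heq] at this
  convert this using 1
  rw [real_inner_self_eq_norm_mul_norm, Real.sqrt_mul_self (norm_nonneg _),
    real_inner_comm (a + ε • b) b]
  have hn : ‖a + ε • b‖ ≠ 0 := norm_ne_zero_iff.2 h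
  field_simp
  ring

lemma my_d2 (a b : E) (ε : ℝ) (h : a + ε • b ≠ 0) :
    HasDerivAt (fun x : ℝ => ⟪b, a + x • b⟫ / ‖a + x • b‖)
      ((⟪b, b⟫ * ‖a + ε • b‖ - ⟪b, a + ε • b⟫ * (⟪b, a + ε • b⟫ / ‖a + ε • b‖))
        / ‖a + ε • b‖ ^ 2) ε := by
  have hy : HasDerivAt (fun x : ℝ => a + x • b) b ε := by
    simpa using ((hasDerivAt_id ε).smul_const b).const_add a
  have hnum : HasDerivAt (fun x : ℝ => ⟪b, a + x • b⟫) ⟪b, b⟫ ε := by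
    simpa using (hasDerivAt_const ε b).inner ℝ hy
  exact hnum.div (my_d1 a b ε h) (norm_ne_zero_iff.2 h)

lemma my_lowbd {L c M : ℝ} (hc : 0 < c) (hM : 0 ≤ M) {a b : ℝ → E}
    (hlow : ∀ s ∈ Set.Icc (0:ℝ) L, c ≤ ‖a s‖) (hup : ∀ s ∈ Set.Icc (0:ℝ) L, ‖b s‖ ≤ M)
    {x : ℝ} (hx : |x| < c / (2 * (M + 1))) :
    ∀ s ∈ Set.Icc (0:ℝ) L, c / 2 ≤ ‖a s + x • b s‖ := by
  intro s hs
  have h1 := hlow s hs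
  have h2 := hup s hs
  have h0 : (0:ℝ) ≤ ‖b s‖ := norm_nonneg _
  have h3 : ‖a s‖ ≤ ‖a s + x • b s‖ + ‖x • b s‖ := by
    calc ‖a s‖ = ‖a s + x • b s - x • b s‖ := by rw [add_sub_cancel_right]
    _ ≤ _ := norm_sub_le _ _
  have h4 : ‖x • b s‖ = |x| * ‖b s‖ := by rw [norm_smul, Real.norm_eq_abs]
  have h5 : |x| * ‖b s‖ ≤ (c / (2 * (M + 1))) * M :=
    mul_le_mul hx.le h2 h0 (by positivity)
  have h6 : (c / (2 * (M + 1))) * M ≤ c / 2 := by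
    rw [div_mul_eq_mul_div, div_le_div_iff₀ (by positivity) (by norm_num)]
    nlinarith
  linarith

lemma my_stepA {L : ℝ} (hL : 0 < L) {a b : ℝ → E} (ha : Continuous a) (hb : Continuous b)
    {c M : ℝ} (hc : 0 < c) (hM : 0 ≤ M)
    (hlow : ∀ s ∈ Set.Icc (0:ℝ) L, c ≤ ‖a s‖) (hup : ∀ s ∈ Set.Icc (0:ℝ) L, ‖b s‖ ≤ M)
    {x₀ : ℝ} (hx₀ : |x₀| < c / (2 * (M + 1))) :
    HasDerivAt (fun x : ℝ => ∫ s in (0:ℝ)..L, ‖a s + x • b s‖)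
      (∫ s in (0:ℝ)..L, ⟪b s, a s + x₀ • b s⟫ / ‖a s + x₀ • b s‖) x₀ := by
  set r := c / (2 * (M + 1)) with hr
  have hrpos : 0 < r := by positivity
  have hIsub : Set.uIoc (0:ℝ) L ⊆ Set.Icc (0:ℝ) L := by
    rw [Set.uIoc_of_le hL.le]; exact Set.Ioc_subset_Icc_self
  have hεpos : 0 < r - |x₀| := by linarith
  have key : ∀ x : ℝ, |x| < r → ∀ s ∈ Set.Icc (0:ℝ) L, (0:ℝ) < ‖a s + x • b s‖ := by
    intro x hx s hs
    have := my_lowbd hc hM hlow hup hx s hs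
    linarith
  have hball : ∀ x ∈ ball x₀ (r - |x₀|), |x| < r := by
    intro x hx
    rw [mem_ball, Real.dist_eq] at hx
    have := abs_sub_abs_le_abs_sub x x₀
    linarith
  refine (intervalIntegral.hasDerivAt_integral_of_dominated_loc_of_deriv_le (ball_mem_nhds x₀ hεpos)
    (F := fun x s => ‖a s + x • b s‖)
    (F' := fun x s => ⟪b s, a s + x • b s⟫ / ‖a s + x • b s‖)
    (bound := fun _ => M) ?_ ?_ ?_ ?_ ?_ ?_).2
  · exact Filter.Eventually.of_forall fun x =>
      ((ha.add (hb.const_smul x)).norm).aestronglyMeasurable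
  · exact ((ha.add (hb.const_smul x₀)).norm).intervalIntegrable 0 L
  · have hcont : ContinuousOn (fun s => ⟪b s, a s + x₀ • b s⟫ / ‖a s + x₀ • b s‖)
        (Set.Icc (0:ℝ) L) := by
      apply ContinuousOn.div
      · exact (hb.inner (ha.add (hb.const_smul x₀))).continuousOn
      · exact ((ha.add (hb.const_smul x₀)).norm).continuousOn
      · exact fun s hs => (key x₀ hx₀ s hs).ne'
    exact (hcont.mono hIsub).aestronglyMeasurable measurableSet_uIoc
  · refine Filter.Eventually.of_forall fun s hs x hx => ?_
    have hs' := hIsub hs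
    have hpos := key x (hball x hx) s hs'
    rw [Real.norm_eq_abs, abs_div, abs_of_pos hpos, div_le_iff₀ hpos]
    calc |⟪b s, a s + x • b s⟫| ≤ ‖b s‖ * ‖a s + x • b s‖ := abs_real_inner_le_norm _ _
    _ ≤ M * ‖a s + x • b s‖ := by
        exact mul_le_mul_of_nonneg_right (hup s hs') (norm_nonneg _)
  · exact intervalIntegrable_const
  · refine Filter.Eventually.of_forall fun s hs x hx => ?_
    exact my_d1 (a s) (b s) x (norm_pos_iff.1 (key x (hball x hx) s (hIsub hs)))

lemma my_stepB {L : ℝ} (hL : 0 < L) {a b : ℝ → E} (ha : Continuous a) (hb : Continuous b)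
    {c M : ℝ} (hc : 0 < c) (hM : 0 ≤ M)
    (hlow : ∀ s ∈ Set.Icc (0:ℝ) L, c ≤ ‖a s‖) (hup : ∀ s ∈ Set.Icc (0:ℝ) L, ‖b s‖ ≤ M) :
    HasDerivAt (fun x : ℝ => ∫ s in (0:ℝ)..L, ⟪b s, a s + x • b s⟫ / ‖a s + x • b s‖)
      (∫ s in (0:ℝ)..L,
        (⟪b s, b s⟫ * ‖a s + (0:ℝ) • b s‖ - ⟪b s, a s + (0:ℝ) • b s⟫ *
          (⟪b s, a s + (0:ℝ) • b s⟫ / ‖a s + (0:ℝ) • b s‖)) / ‖a s + (0:ℝ) • b s‖ ^ 2) 0 := by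
  set r := c / (2 * (M + 1)) with hr
  have hrpos : 0 < r := by positivity
  have hIsub : Set.uIoc (0:ℝ) L ⊆ Set.Icc (0:ℝ) L := by
    rw [Set.uIoc_of_le hL.le]; exact Set.Ioc_subset_Icc_self
  have key : ∀ x : ℝ, |x| < r → ∀ s ∈ Set.Icc (0:ℝ) L, c / 2 ≤ ‖a s + x • b s‖ :=
    fun x hx => my_lowbd hc hM hlow hup hx
  have keypos : ∀ x : ℝ, |x| < r → ∀ s ∈ Set.Icc (0:ℝ) L, (0:ℝ) < ‖a s + x • b s‖ := by
    intro x hx s hs; have := key x hx s hs; linarith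
  have hball : ∀ x ∈ ball (0:ℝ) r, |x| < r := by
    intro x hx; rwa [mem_ball, Real.dist_eq, sub_zero] at hx
  have h0r : |(0:ℝ)| < r := by simpa using hrpos
  refine (intervalIntegral.hasDerivAt_integral_of_dominated_loc_of_deriv_le (ball_mem_nhds (0:ℝ) hrpos)
    (F := fun x s => ⟪b s, a s + x • b s⟫ / ‖a s + x • b s‖)
    (F' := fun x s => (⟪b s, b s⟫ * ‖a s + x • b s‖
        - ⟪b s, a s + x • b s⟫ * (⟪b s, a s + x • b s⟫ / ‖a s + x • b s‖))
        / ‖a s + x • b s‖ ^ 2)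
    (bound := fun _ => 4 * M ^ 2 / c) (x₀ := (0:ℝ)) ?_ ?_ ?_ ?_ ?_ ?_).2
  · -- measurability of F x for x near 0
    filter_upwards [Metric.ball_mem_nhds (0:ℝ) hrpos] with x hx
    have hcont : ContinuousOn (fun s => ⟪b s, a s + x • b s⟫ / ‖a s + x • b s‖)
        (Set.Icc (0:ℝ) L) := by
      apply ContinuousOn.div
      · exact (hb.inner (ha.add (hb.const_smul x))).continuousOn
      · exact ((ha.add (hb.const_smul x)).norm).continuousOn
      · exact fun s hs => (keypos x (hball x hx) s hs).ne'
    exact (hcont.mono hIsub).aestronglyMeasurable measurableSet_uIoc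
  · -- integrability of F 0
    apply ContinuousOn.intervalIntegrable
    rw [Set.uIcc_of_le hL.le]
    apply ContinuousOn.div
    · exact (hb.inner (ha.add (hb.const_smul 0))).continuousOn
    · exact ((ha.add (hb.const_smul 0)).norm).continuousOn
    · exact fun s hs => (keypos 0 h0r s hs).ne'
  · -- measurability of F' 0
    have hcont : ContinuousOn (fun s => (⟪b s, b s⟫ * ‖a s + (0:ℝ) • b s‖
        - ⟪b s, a s + (0:ℝ) • b s⟫ * (⟪b s, a s + (0:ℝ) • b s⟫ / ‖a s + (0:ℝ) • b s‖))
        / ‖a s + (0:ℝ) • b s‖ ^ 2) (Set.Icc (0:ℝ) L) := by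
      have hy : Continuous fun s => a s + (0:ℝ) • b s := ha.add (hb.const_smul 0)
      have hne : ∀ s ∈ Set.Icc (0:ℝ) L, ‖a s + (0:ℝ) • b s‖ ≠ 0 :=
        fun s hs => (keypos 0 h0r s hs).ne'
      apply ContinuousOn.div
      · apply ContinuousOn.sub
        · exact ((hb.inner hb).mul hy.norm).continuousOn
        · exact ((hb.inner hy).continuousOn).mul
            (((hb.inner hy).continuousOn).div (hy.norm.continuousOn) hne)
      · exact (hy.norm.continuousOn.pow 2)
      · exact fun s hs => pow_ne_zero 2 (hne s hs)
    exact (hcont.mono hIsub).aestronglyMeasurable measurableSet_uIoc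
  · -- bound
    refine Filter.Eventually.of_forall fun s hs x hx => ?_
    have hs' := hIsub hs
    have hy2 : c / 2 ≤ ‖a s + x • b s‖ := key x (hball x hx) s hs'
    have hypos : (0:ℝ) < ‖a s + x • b s‖ := by linarith
    set Y := ‖a s + x • b s‖
    set B := ‖b s‖ with hB
    set I := ⟪b s, a s + x • b s⟫ with hI
    have hbb : ⟪b s, b s⟫ = B ^ 2 := real_inner_self_eq_norm_sq _
    have hcs : |I| ≤ B * Y := abs_real_inner_le_norm _ _
    have hBM : B ≤ M := hup s hs'
    have hB0 : (0:ℝ) ≤ B := norm_nonneg _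
    beta_reduce
    rw [Real.norm_eq_abs, hbb]
    have heq : (B ^ 2 * Y - I * (I / Y)) / Y ^ 2 = (B ^ 2 * Y ^ 2 - I ^ 2) / Y ^ 3 := by
      field_simp
    rw [heq]
    have hnum0 : 0 ≤ B ^ 2 * Y ^ 2 - I ^ 2 := by nlinarith [abs_nonneg I, sq_abs I]
    rw [abs_div, abs_of_nonneg hnum0, abs_of_pos (by positivity : (0:ℝ) < Y ^ 3),
      div_le_div_iff₀ (by positivity) hc]
    have hB2 : B ^ 2 ≤ M ^ 2 := by nlinarith
    have hcY : c ≤ 2 * Y := by linarith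
    have h1 : 0 ≤ I ^ 2 * c := mul_nonneg (sq_nonneg I) hc.le
    have h2 : B ^ 2 * Y ^ 2 * c ≤ M ^ 2 * Y ^ 2 * c :=
      mul_le_mul_of_nonneg_right (mul_le_mul_of_nonneg_right hB2 (sq_nonneg Y)) hc.le
    have h3 : M ^ 2 * Y ^ 2 * c ≤ M ^ 2 * Y ^ 2 * (2 * Y) :=
      mul_le_mul_of_nonneg_left hcY (by positivity)
    nlinarith [h1, h2, h3, mul_nonneg (sq_nonneg M) (pow_nonneg hypos.le 3)]
  · exact intervalIntegrable_const
  · -- differentiability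
    refine Filter.Eventually.of_forall fun s hs x hx => ?_
    exact my_d2 (a s) (b s) x
      (norm_pos_iff.1 (keypos x (hball x hx) s (hIsub hs)))

/-- Second variation of the deformed perimeter (eq. (eq:F(u) 2nd order)). -/
theorem stmt3
    (L Δt : ℝ) (hL : 0 < L) (hΔt : 0 < Δt)
    (X u v : ℝ → EuclideanSpace ℝ (Fin 2))
    (hX : ContDiff ℝ 1 X) (hu : ContDiff ℝ 1 u) (hv : ContDiff ℝ 1 v)
    (hXper : Function.Periodic X L) (huper : Function.Periodic u L)
    (hvper : Function.Periodic v L)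
    (hpos : ∀ s, 0 < ‖deriv X s + Δt • deriv u s‖)
    (T : ℝ → EuclideanSpace ℝ (Fin 2))
    (hT : ∀ s, T s = ‖deriv X s + Δt • deriv u s‖⁻¹ • (deriv X s + Δt • deriv u s)) :
    (∀ᶠ ε in nhds (0:ℝ), DifferentiableAt ℝ
      (fun ε : ℝ => ∫ s in (0:ℝ)..L, ‖deriv X s + Δt • deriv u s + (ε * Δt) • deriv v s‖) ε) ∧
    HasDerivAt
      (deriv (fun ε : ℝ =>
        ∫ s in (0:ℝ)..L, ‖deriv X s + Δt • deriv u s + (ε * Δt) • deriv v s‖))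
      (Δt^2 * ∫ s in (0:ℝ)..L,
        (‖deriv v s‖^2 - (⟪deriv v s, T s⟫)^2) / ‖deriv X s + Δt • deriv u s‖) 0 := by
  set a : ℝ → EuclideanSpace ℝ (Fin 2) := fun s => deriv X s + Δt • deriv u s with ha_def
  set b : ℝ → EuclideanSpace ℝ (Fin 2) := fun s => Δt • deriv v s with hb_def
  have ha : Continuous a := ((hX.continuous_deriv le_rfl).add
    ((hu.continuous_deriv le_rfl).const_smul Δt))
  have hb : Continuous b := (hv.continuous_deriv le_rfl).const_smul Δt
  -- the function in the statement equals fun x => ∫ s in 0..L, ‖a s + x • b s‖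
  have hfun : (fun ε : ℝ =>
      ∫ s in (0:ℝ)..L, ‖deriv X s + Δt • deriv u s + (ε * Δt) • deriv v s‖)
      = fun x : ℝ => ∫ s in (0:ℝ)..L, ‖a s + x • b s‖ := by
    funext x
    congr 1
    funext s
    rw [ha_def, hb_def]
    simp [smul_smul]
  -- lower bound c and upper bound M on [0, L]
  obtain ⟨s₁, hs₁, hmin⟩ := (isCompact_Icc (a := (0:ℝ)) (b := L)).exists_isMinOn
    (Set.nonempty_Icc.2 hL.le) (ha.norm.continuousOn)
  obtain ⟨s₂, hs₂, hmax⟩ := (isCompact_Icc (a := (0:ℝ)) (b := L)).exists_isMaxOn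
    (Set.nonempty_Icc.2 hL.le) (hb.norm.continuousOn)
  set c := ‖a s₁‖ with hc_def
  set M := ‖b s₂‖ with hM_def
  have hc : 0 < c := hpos s₁
  have hM : 0 ≤ M := norm_nonneg _
  have hlow : ∀ s ∈ Set.Icc (0:ℝ) L, c ≤ ‖a s‖ := fun s hs => hmin hs
  have hup : ∀ s ∈ Set.Icc (0:ℝ) L, ‖b s‖ ≤ M := fun s hs => hmax hs
  set r := c / (2 * (M + 1)) with hr_def
  have hrpos : 0 < r := by positivity
  have hball : ∀ x ∈ Metric.ball (0:ℝ) r, |x| < r := by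
    intro x hx; rwa [Metric.mem_ball, Real.dist_eq, sub_zero] at hx
  -- first derivative everywhere on the ball
  have hd1 : ∀ x ∈ Metric.ball (0:ℝ) r,
      HasDerivAt (fun x : ℝ => ∫ s in (0:ℝ)..L, ‖a s + x • b s‖)
        (∫ s in (0:ℝ)..L, ⟪b s, a s + x • b s⟫ / ‖a s + x • b s‖) x :=
    fun x hx => my_stepA hL ha hb hc hM hlow hup (hball x hx)
  have hmem : Metric.ball (0:ℝ) r ∈ nhds (0:ℝ) := Metric.ball_mem_nhds 0 hrpos
  constructor
  · rw [hfun]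
    filter_upwards [hmem] with x hx
    exact (hd1 x hx).differentiableAt
  · rw [hfun]
    have heq : deriv (fun x : ℝ => ∫ s in (0:ℝ)..L, ‖a s + x • b s‖)
        =ᶠ[nhds (0:ℝ)] fun x : ℝ =>
          ∫ s in (0:ℝ)..L, ⟪b s, a s + x • b s⟫ / ‖a s + x • b s‖ := by
      filter_upwards [hmem] with x hx
      exact (hd1 x hx).deriv
    have hd2 := my_stepB hL ha hb hc hM hlow hup
    have hd2' := hd2.congr_of_eventuallyEq heq
    convert hd2' using 1
    case e'_4 => rfl
    case e'_5 => rfl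
    rw [← intervalIntegral.integral_const_mul]
    apply intervalIntegral.integral_congr
    intro s _
    have hn : ‖a s‖ ≠ 0 := (hpos s).ne'
    simp only [zero_smul, add_zero]
    rw [hT s]
    rw [ha_def] at hn ⊢
    rw [hb_def]
    simp only [real_inner_smul_left, real_inner_smul_right, real_inner_self_eq_norm_sq,
      norm_smul, Real.norm_eq_abs, abs_of_pos hΔt, mul_pow]
    field_simp
end

section
/- Let L > 0 and Δt > 0, let X, u : ℝ → ℝ² be continuously differentiable and L-periodic with ‖X'(s) + Δt·u'(s)‖ > 0 for every s, and let δu : ℝ → ℝ² be continuously differentiable. Then ∫₀^L ‖X'(s) + Δt·(u + δu)'(s)‖ ds ≤ ∫₀^L ‖X'(s) + Δt·u'(s)‖ ds + Δt·∫₀^L ⟨δu'(s), T(s)⟩ ds + (Δt²/2)·∫₀^L ‖δu'(s)‖²/‖X'(s) + Δt·u'(s)‖ ds, where T(s) = (X'(s) + Δt·u'(s))/‖X'(s) + Δt·u'(s)‖. -/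
open MeasureTheory
open scoped RealInnerProductSpace

/-- Coercive upper bound on the deformed perimeter (eq. (eq:F(u) 2nd order_2)). -/
theorem stmt5
    (L Δt : ℝ) (hL : 0 < L) (hΔt : 0 < Δt)
    (X u δu : ℝ → EuclideanSpace ℝ (Fin 2))
    (hX : ContDiff ℝ 1 X) (hu : ContDiff ℝ 1 u) (hδu : ContDiff ℝ 1 δu)
    (hXper : Function.Periodic X L) (huper : Function.Periodic u L)
    (hpos : ∀ s, 0 < ‖deriv X s + Δt • deriv u s‖)
    (T : ℝ → EuclideanSpace ℝ (Fin 2))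
    (hT : ∀ s, T s = ‖deriv X s + Δt • deriv u s‖⁻¹ • (deriv X s + Δt • deriv u s)) :
    ∫ s in (0:ℝ)..L, ‖deriv X s + Δt • deriv (u + δu) s‖
      ≤ (∫ s in (0:ℝ)..L, ‖deriv X s + Δt • deriv u s‖)
        + Δt * (∫ s in (0:ℝ)..L, ⟪deriv δu s, T s⟫)
        + (Δt^2 / 2) *
          ∫ s in (0:ℝ)..L, ‖deriv δu s‖^2 / ‖deriv X s + Δt • deriv u s‖ := by
  have hX' : Continuous (deriv X) := hX.continuous_deriv le_rfl
  have hu' : Continuous (deriv u) := hu.continuous_deriv le_rfl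
  have hδ' : Continuous (deriv δu) := hδu.continuous_deriv le_rfl
  set f : ℝ → EuclideanSpace ℝ (Fin 2) := fun s => deriv X s + Δt • deriv u s with hf
  have hfc : Continuous f := hX'.add (hu'.const_smul Δt)
  have hfn : ∀ s, ‖f s‖ ≠ 0 := fun s => (hpos s).ne'
  have hderiv : ∀ s, deriv (u + δu) s = deriv u s + deriv δu s := fun s =>
    deriv_add (hu.differentiable one_ne_zero s) (hδu.differentiable one_ne_zero s)
  have hre : (fun s => ‖deriv X s + Δt • deriv (u + δu) s‖)
      = fun s => ‖f s + Δt • deriv δu s‖ := by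
    funext s
    rw [hderiv s, smul_add, ← add_assoc]
  -- the pointwise inequality
  have point : ∀ s, ‖f s + Δt • deriv δu s‖
      ≤ ‖f s‖ + Δt * ⟪deriv δu s, T s⟫ + (Δt^2 / 2) * (‖deriv δu s‖^2 / ‖f s‖) := by
    intro s
    have h0 : (0:ℝ) < ‖f s‖ := hpos s
    set a := f s with ha
    set b := Δt • deriv δu s with hb
    have hsq : ‖a + b‖^2 = ‖a‖^2 + 2 * ⟪a, b⟫ + ‖b‖^2 := norm_add_sq_real a b
    have hkey : ‖a + b‖ ≤ ‖a + b‖^2 / (2 * ‖a‖) + ‖a‖ / 2 := by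
      have h1 : ‖a + b‖^2 / (2 * ‖a‖) + ‖a‖ / 2 - ‖a + b‖
          = (‖a + b‖ - ‖a‖)^2 / (2 * ‖a‖) := by
        field_simp
        ring
      have h2 : (0:ℝ) ≤ (‖a + b‖ - ‖a‖)^2 / (2 * ‖a‖) :=
        div_nonneg (sq_nonneg _) (by linarith)
      linarith
    have hib : ⟪a, b⟫ = Δt * ⟪deriv δu s, a⟫ := by
      rw [hb, real_inner_smul_right, real_inner_comm]
    have hnb : ‖b‖ = Δt * ‖deriv δu s‖ := by
      rw [hb, norm_smul, Real.norm_eq_abs, abs_of_pos hΔt]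
    have hit : ⟪deriv δu s, T s⟫ = ‖a‖⁻¹ * ⟪deriv δu s, a⟫ := by
      rw [hT s, real_inner_smul_right]
    calc ‖a + b‖ ≤ ‖a + b‖^2 / (2 * ‖a‖) + ‖a‖ / 2 := hkey
      _ = ‖a‖ + Δt * ⟪deriv δu s, T s⟫ + (Δt^2 / 2) * (‖deriv δu s‖^2 / ‖a‖) := by
          rw [hsq, hib, hnb, hit]
          field_simp
          ring
  -- continuity of the integrands
  have hTre : (fun s => ⟪deriv δu s, T s⟫)
      = fun s => ⟪deriv δu s, ‖f s‖⁻¹ • f s⟫ := by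
    funext s; rw [hT s]
  have hTic : Continuous fun s => ⟪deriv δu s, T s⟫ := by
    rw [hTre]
    exact hδ'.inner ((hfc.norm.inv₀ hfn).smul hfc)
  have h3c : Continuous fun s => ‖deriv δu s‖^2 / ‖f s‖ :=
    (hδ'.norm.pow 2).div hfc.norm hfn
  have hLc : Continuous fun s => ‖f s + Δt • deriv δu s‖ :=
    (hfc.add (hδ'.const_smul Δt)).norm
  have hRc : Continuous fun s =>
      ‖f s‖ + Δt * ⟪deriv δu s, T s⟫ + (Δt^2 / 2) * (‖deriv δu s‖^2 / ‖f s‖) :=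
    (hfc.norm.add (continuous_const.mul hTic)).add (continuous_const.mul h3c)
  calc ∫ s in (0:ℝ)..L, ‖deriv X s + Δt • deriv (u + δu) s‖
      = ∫ s in (0:ℝ)..L, ‖f s + Δt • deriv δu s‖ := by rw [hre]
    _ ≤ ∫ s in (0:ℝ)..L,
        (‖f s‖ + Δt * ⟪deriv δu s, T s⟫ + (Δt^2 / 2) * (‖deriv δu s‖^2 / ‖f s‖)) :=
        intervalIntegral.integral_mono_on hL.le (hLc.intervalIntegrable _ _)
          (hRc.intervalIntegrable _ _) (fun s _ => point s)
    _ = (∫ s in (0:ℝ)..L, ‖f s‖)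
        + Δt * (∫ s in (0:ℝ)..L, ⟪deriv δu s, T s⟫)
        + (Δt^2 / 2) * ∫ s in (0:ℝ)..L, ‖deriv δu s‖^2 / ‖f s‖ := by
        rw [intervalIntegral.integral_add (f := fun s => ‖f s‖ + Δt * ⟪deriv δu s, T s⟫)
            (g := fun s => (Δt^2 / 2) * (‖deriv δu s‖^2 / ‖f s‖))
            ((hfc.norm.add (continuous_const.mul hTic)).intervalIntegrable _ _)
            ((continuous_const.mul h3c).intervalIntegrable _ _),
          intervalIntegral.integral_add (f := fun s => ‖f s‖) (g := fun s => Δt * ⟪deriv δu s, T s⟫)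
            (hfc.norm.intervalIntegrable _ _)
            ((continuous_const.mul hTic).intervalIntegrable _ _),
          intervalIntegral.integral_const_mul, intervalIntegral.integral_const_mul]
end
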